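/- Let Γ be a countable discrete group and Λ ≤ Γ a subgroup. Assume that for every g ∈ Γ \ Λ, the operator 0 belongs to the norm-closure of the convex hull of {λ_{t g t⁻¹} : t ∈ Λ} in the bounded operators on ℓ²(Γ). Then for every net (ξ_i) of unit vectors in ℓ²(Γ) such that ‖λ_t ξ_i − ξ_i‖ → 0 for every t ∈ Λ, and for every g ∈ Γ \ Λ, the inner products ⟨λ_g ξ_i, ξ_i⟩ converge to 0. -/

import Mathlib

noncomputable section
set_option maxHeartbeats 1000000
set_option synthInstance.maxHeartbeats 400000

theorem translate_mem {Γ : Type} [Group Γ] (g : Γ) (f : lp (fun _ : Γ => ℂ) 2) :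
    Memℓp (fun x : Γ => f (g⁻¹ * x)) 2 := by
  apply memℓp_gen (p := 2)
  have h : Summable fun i : Γ => ‖f i‖ ^ (2 : ENNReal).toReal :=
    (lp.memℓp f).summable (by norm_num)
  exact (Equiv.summable_iff (Equiv.mulLeft (g⁻¹ : Γ))).mpr h

/-- The left regular representation `λ_g`, `(λ_g ξ)(x) = ξ(g⁻¹ x)`, as a linear isometric
bijection of `ℓ²(Γ)`. -/
def lam {Γ : Type} [Group Γ] (g : Γ) :
    lp (fun _ : Γ => ℂ) 2 ≃ₗᵢ[ℂ] lp (fun _ : Γ => ℂ) 2 where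
  toFun f := ⟨fun x => f (g⁻¹ * x), translate_mem g f⟩
  invFun f := ⟨fun x => f (g * x), by have h := translate_mem g⁻¹ f; simp only [inv_inv] at h; exact h⟩
  left_inv f := by apply lp.ext; funext x; simp
  right_inv f := by apply lp.ext; funext x; simp
  map_add' f h := by apply lp.ext; funext x; simp [lp.coeFn_add]; rfl
  map_smul' c f := by apply lp.ext; funext x; simp [lp.coeFn_smul]
  norm_map' f := by
    rw [lp.norm_eq_tsum_rpow (by norm_num : (0:ℝ) < (2 : ENNReal).toReal),
        lp.norm_eq_tsum_rpow (by norm_num : (0:ℝ) < (2 : ENNReal).toReal)]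
    congr 1
    exact (Equiv.mulLeft (g⁻¹ : Γ)).tsum_eq (fun x => ‖f x‖ ^ (2 : ENNReal).toReal)

/-- The unitary `λ_g` as a bounded operator on `ℓ²(Γ)`. -/
def lamCLM {Γ : Type} [Group Γ] (g : Γ) :
    lp (fun _ : Γ => ℂ) 2 →L[ℂ] lp (fun _ : Γ => ℂ) 2 :=
  (lam g).toLinearIsometry.toContinuousLinearMap

lemma lamCLM_apply_coe {Γ : Type} [Group Γ] (g : Γ) (f : lp (fun _ : Γ => ℂ) 2) (x : Γ) :
    (lamCLM g f : Γ → ℂ) x = f (g⁻¹ * x) := rfl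

lemma lamCLM_mul {Γ : Type} [Group Γ] (a b : Γ) (f : lp (fun _ : Γ => ℂ) 2) :
    lamCLM (a * b) f = lamCLM a (lamCLM b f) := by
  apply lp.ext; funext x
  simp only [lamCLM_apply_coe, mul_inv_rev, mul_assoc]

lemma lamCLM_norm_map {Γ : Type} [Group Γ] (g : Γ) (f : lp (fun _ : Γ => ℂ) 2) :
    ‖lamCLM g f‖ = ‖f‖ := (lam g).norm_map f

open scoped InnerProductSpace in
lemma key_bound {Γ : Type} [Group Γ] [Countable Γ] (t g : Γ) (ξ : lp (fun _ : Γ => ℂ) 2)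
    (hξ : ‖ξ‖ = 1) :
    ‖⟪lamCLM (t * g * t⁻¹) ξ, ξ⟫_ℂ - ⟪lamCLM g ξ, ξ⟫_ℂ‖ ≤ 2 * ‖lamCLM t ξ - ξ‖ := by
  set η : lp (fun _ : Γ => ℂ) 2 := lamCLM t⁻¹ ξ with hη
  have hback : lamCLM t η = ξ := by
    rw [hη, ← lamCLM_mul, mul_inv_cancel]
    apply lp.ext; funext x; simp [lamCLM_apply_coe]
  have hηnorm : ‖η‖ = 1 := by rw [hη, lamCLM_norm_map, hξ]
  have h1 : ⟪lamCLM (t * g * t⁻¹) ξ, ξ⟫_ℂ = ⟪lamCLM g η, η⟫_ℂ := by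
    have : lamCLM (t * g * t⁻¹) ξ = lamCLM t (lamCLM g η) := by
      rw [lamCLM_mul, lamCLM_mul]
    rw [this]
    calc ⟪lamCLM t (lamCLM g η), ξ⟫_ℂ = ⟪lam t (lamCLM g η), lam t η⟫_ℂ := by rw [← hback]; rfl
      _ = ⟪lamCLM g η, η⟫_ℂ := (lam t).inner_map_map _ _
  have hdiff : ‖η - ξ‖ = ‖lamCLM t ξ - ξ‖ := by
    have : lamCLM t (η - ξ) = ξ - lamCLM t ξ := by rw [map_sub, hback]
    rw [← lamCLM_norm_map t (η - ξ), this, norm_sub_rev]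
  rw [h1]
  have hexp : ⟪lamCLM g η, η⟫_ℂ - ⟪lamCLM g ξ, ξ⟫_ℂ
      = ⟪lamCLM g η, η - ξ⟫_ℂ + ⟪lamCLM g (η - ξ), ξ⟫_ℂ := by
    rw [map_sub, inner_sub_right, inner_sub_left]; ring
  rw [hexp]
  calc ‖⟪lamCLM g η, η - ξ⟫_ℂ + ⟪lamCLM g (η - ξ), ξ⟫_ℂ‖
      ≤ ‖⟪lamCLM g η, η - ξ⟫_ℂ‖ + ‖⟪lamCLM g (η - ξ), ξ⟫_ℂ‖ := norm_add_le _ _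
    _ ≤ 1 * ‖η - ξ‖ + ‖η - ξ‖ * 1 := by
        apply add_le_add
        · calc ‖⟪lamCLM g η, η - ξ⟫_ℂ‖ ≤ ‖lamCLM g η‖ * ‖η - ξ‖ := norm_inner_le_norm _ _
            _ = 1 * ‖η - ξ‖ := by rw [lamCLM_norm_map, hηnorm]
        · calc ‖⟪lamCLM g (η - ξ), ξ⟫_ℂ‖ ≤ ‖lamCLM g (η - ξ)‖ * ‖ξ‖ := norm_inner_le_norm _ _
            _ = ‖η - ξ‖ * 1 := by rw [lamCLM_norm_map, hξ]
    _ = 2 * ‖lamCLM t ξ - ξ‖ := by rw [hdiff]; ring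

open scoped InnerProductSpace in
/-- If for every `g ∉ Λ` the operator `0` lies in the norm-closure of the
convex hull of `{λ_{t g t⁻¹} : t ∈ Λ}`, then for every net `(ξ_i)` of almost `Λ`-invariant
unit vectors in `ℓ²(Γ)` and every `g ∉ Λ`, the inner products `⟨λ_g ξ_i, ξ_i⟩` tend to `0`. -/
theorem inner_tendsto_zero_of_zero_mem_closure_convexHull
    {Γ : Type} [Group Γ] [Countable Γ] (Λ : Subgroup Γ)
    (hconv : ∀ g ∉ Λ, (0 : lp (fun _ : Γ => ℂ) 2 →L[ℂ] lp (fun _ : Γ => ℂ) 2) ∈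
      closure (convexHull ℝ {T | ∃ t ∈ Λ, T = lamCLM (t * g * t⁻¹)})) :
    ∀ (ι : Type) (l : Filter ι), l.NeBot →
      ∀ ξ : ι → lp (fun _ : Γ => ℂ) 2, (∀ i, ‖ξ i‖ = 1) →
      (∀ t ∈ Λ, Filter.Tendsto (fun i => ‖lamCLM t (ξ i) - ξ i‖) l (nhds 0)) →
      ∀ g ∉ Λ, Filter.Tendsto (fun i => ⟪lamCLM g (ξ i), ξ i⟫_ℂ) l (nhds 0) := by
  intro ι l _ ξ hnorm halm g hg
  rw [NormedAddCommGroup.tendsto_nhds_zero]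
  intro ε hε
  -- pick a convex combination S with ‖S‖ < ε/2
  obtain ⟨S, hSmem, hSnorm⟩ : ∃ S ∈ convexHull ℝ {T | ∃ t ∈ Λ, T = lamCLM (t * g * t⁻¹)},
      ‖S‖ < ε / 2 := by
    obtain ⟨S, hS1, hS2⟩ := Metric.mem_closure_iff.mp (hconv g hg) (ε / 2) (by linarith)
    exact ⟨S, hS1, by rwa [dist_eq_norm, zero_sub, norm_neg] at hS2⟩
  rw [convexHull_eq] at hSmem
  obtain ⟨κ, s, w, z, hw0, hw1, hzmem, hS⟩ := hSmem
  have hSsum : S = ∑ j ∈ s, w j • z j := by rw [← hS, Finset.centerMass_eq_of_sum_1 _ _ hw1]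
  -- the error term tends to zero
  set F : ι → ℝ := fun i => ∑ j ∈ s, w j * ‖⟪z j (ξ i), ξ i⟫_ℂ - ⟪lamCLM g (ξ i), ξ i⟫_ℂ‖
    with hF
  have hFtend : Filter.Tendsto F l (nhds 0) := by
    have : Filter.Tendsto (fun i => ∑ j ∈ s,
        w j * ‖⟪z j (ξ i), ξ i⟫_ℂ - ⟪lamCLM g (ξ i), ξ i⟫_ℂ‖) l (nhds (∑ j ∈ s, (0:ℝ))) := by
      apply tendsto_finset_sum
      intro j hj
      obtain ⟨u, hu, hzj⟩ := hzmem j hj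
      apply squeeze_zero (g := fun i => (w j * 2) * ‖lamCLM u (ξ i) - ξ i‖)
        (fun i => mul_nonneg (hw0 j hj) (norm_nonneg _))
      · intro i
        rw [mul_assoc]
        exact mul_le_mul_of_nonneg_left (by rw [hzj]; exact key_bound u g (ξ i) (hnorm i))
          (hw0 j hj)
      · simpa using (halm u hu).const_mul (w j * 2)
    simpa using this
  have hev : ∀ᶠ i in l, F i < ε / 2 := by
    have := hFtend.eventually (eventually_lt_nhds (show (0:ℝ) < ε / 2 by linarith))
    exact this
  filter_upwards [hev] with i hFi
  -- main estimate
  have hinnS : ⟪S (ξ i), ξ i⟫_ℂ = ∑ j ∈ s, (w j : ℂ) * ⟪z j (ξ i), ξ i⟫_ℂ := by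
    rw [hSsum]
    simp only [ContinuousLinearMap.sum_apply, ContinuousLinearMap.smul_apply, sum_inner]
    exact Finset.sum_congr rfl fun j _ => by rw [RCLike.real_smul_eq_coe_smul (K := ℂ), inner_smul_left, RCLike.conj_ofReal]; norm_cast
  have hsplit : ⟪lamCLM g (ξ i), ξ i⟫_ℂ
      = ⟪S (ξ i), ξ i⟫_ℂ + ∑ j ∈ s, (w j : ℂ) *
        (⟪lamCLM g (ξ i), ξ i⟫_ℂ - ⟪z j (ξ i), ξ i⟫_ℂ) := by
    rw [hinnS, ← Finset.sum_add_distrib]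
    have : ∀ j ∈ s, (w j : ℂ) * ⟪z j (ξ i), ξ i⟫_ℂ + (w j : ℂ) *
        (⟪lamCLM g (ξ i), ξ i⟫_ℂ - ⟪z j (ξ i), ξ i⟫_ℂ)
        = (w j : ℂ) * ⟪lamCLM g (ξ i), ξ i⟫_ℂ := fun j _ => by ring
    rw [Finset.sum_congr rfl this, ← Finset.sum_mul]
    have : (∑ j ∈ s, (w j : ℂ)) = 1 := by norm_cast
    rw [this, one_mul]
  calc ‖⟪lamCLM g (ξ i), ξ i⟫_ℂ‖
      ≤ ‖⟪S (ξ i), ξ i⟫_ℂ‖ + ‖∑ j ∈ s, (w j : ℂ) *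
        (⟪lamCLM g (ξ i), ξ i⟫_ℂ - ⟪z j (ξ i), ξ i⟫_ℂ)‖ := by
        rw [congrArg norm hsplit]; exact norm_add_le _ _
    _ ≤ ε / 2 + F i := by
        gcongr
        · calc ‖⟪S (ξ i), ξ i⟫_ℂ‖ ≤ ‖S (ξ i)‖ * ‖ξ i‖ := norm_inner_le_norm _ _
            _ ≤ ‖S‖ * ‖ξ i‖ * ‖ξ i‖ := by gcongr; exact S.le_opNorm _
            _ ≤ ε / 2 := by rw [hnorm i]; simpa using hSnorm.le
        · calc ‖∑ j ∈ s, (w j : ℂ) * (⟪lamCLM g (ξ i), ξ i⟫_ℂ - ⟪z j (ξ i), ξ i⟫_ℂ)‖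
              ≤ ∑ j ∈ s, ‖(w j : ℂ) * (⟪lamCLM g (ξ i), ξ i⟫_ℂ - ⟪z j (ξ i), ξ i⟫_ℂ)‖ :=
              norm_sum_le _ _
            _ ≤ F i := by
                rw [hF]
                apply Finset.sum_le_sum
                intro j hj
                rw [norm_mul, Complex.norm_real, Real.norm_of_nonneg (hw0 j hj), norm_sub_rev]
    _ < ε := by linarith
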